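/- Let R = [a,b] × [c,d] be a closed rectangle in ℝ² and let P, Q : U → ℝ be functions on an open neighborhood U of R that are differentiable at every point of U, with Q_x − P_y Lebesgue integrable on R. Then Green's formula holds on R: the line integral of P dx + Q dy over the positively oriented boundary ∂R equals ∫∫_R (Q_x − P_y) dA; explicitly, ∫_a^b (P(x,c) − P(x,d)) dx + ∫_c^d (Q(b,y) − Q(a,y)) dy = ∫∫_R (∂Q/∂x − ∂P/∂y) dA. No separate integrability assumption on Q_x and P_y individually is needed. -/

import Mathlib

open MeasureTheory

theorem green_aux_mem (a b c d : ℝ) (hab : a ≤ b) (hcd : c ≤ d) (z : ℝ × ℝ)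
    (hz : z ∈ Set.Ioo (min a b) (max a b) ×ˢ Set.Ioo (min c d) (max c d) \ (∅ : Set (ℝ × ℝ))) :
    z ∈ Set.Icc a b ×ˢ Set.Icc c d := by
  rw [min_eq_left hab, max_eq_right hab, min_eq_left hcd, max_eq_right hcd] at hz
  rcases hz with ⟨⟨hx, hy⟩, -⟩
  exact ⟨⟨hx.1.le, hx.2.le⟩, ⟨hy.1.le, hy.2.le⟩⟩

/-- **Green's formula on a rectangle.** Let `R = [a,b] × [c,d]` and let `P, Q` be
real-valued functions on an open neighborhood `U` of `R`, differentiable at every point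
of `U`, with `Q_x − P_y` Lebesgue integrable on `R`. Then
`∫_∂R P dx + Q dy = ∫∫_R (Q_x − P_y) dA`, i.e.
`∫_a^b (P(x,c) − P(x,d)) dx + ∫_c^d (Q(b,y) − Q(a,y)) dy = ∫∫_R (Q_x − P_y) dA`.
No separate integrability assumption on `Q_x` and `P_y` individually is needed. -/
theorem green_formula_rect
    (a b c d : ℝ) (hab : a ≤ b) (hcd : c ≤ d)
    (U : Set (ℝ × ℝ)) (hU : IsOpen U) (hR : Set.Icc (a, c) (b, d) ⊆ U)
    (P Q : ℝ × ℝ → ℝ) (P' Q' : ℝ × ℝ → (ℝ × ℝ →L[ℝ] ℝ))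
    (hP : ∀ z ∈ U, HasFDerivAt P (P' z) z)
    (hQ : ∀ z ∈ U, HasFDerivAt Q (Q' z) z)
    (hInt : IntegrableOn (fun z => Q' z (1, 0) - P' z (0, 1))
      (Set.Icc (a, c) (b, d)) volume) :
    (∫ x in a..b, (P (x, c) - P (x, d))) + (∫ y in c..d, (Q (b, y) - Q (a, y))) =
      ∫ z in Set.Icc (a, c) (b, d), (Q' z (1, 0) - P' z (0, 1)) := by
  have hprod : Set.Icc (a, c) (b, d) = Set.Icc a b ×ˢ Set.Icc c d := by
    rw [← Set.Icc_prod_Icc]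
  have huI : (Set.uIcc a b ×ˢ Set.uIcc c d : Set (ℝ × ℝ)) = Set.Icc a b ×ˢ Set.Icc c d := by
    rw [Set.uIcc_of_le hab, Set.uIcc_of_le hcd]
  have hsub : (Set.Icc a b ×ˢ Set.Icc c d : Set (ℝ × ℝ)) ⊆ U := by
    rw [← hprod]; exact hR
  have Hcf : ContinuousOn Q (Set.uIcc a b ×ˢ Set.uIcc c d) := by
    rw [huI]
    exact fun z hz => ((hQ z (hsub hz)).continuousAt).continuousWithinAt
  have Hcg : ContinuousOn (fun z => -P z) (Set.uIcc a b ×ˢ Set.uIcc c d) := by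
    rw [huI]
    exact fun z hz => (((hP z (hsub hz)).continuousAt).continuousWithinAt).neg
  have key := integral2_divergence_prod_of_hasFDerivAt_off_countable
    Q (fun z => -P z) Q' (fun z => -(P' z)) a c b d ∅ Set.countable_empty
    Hcf Hcg
    (fun z hz => hQ z (hsub (green_aux_mem a b c d hab hcd z hz)))
    (fun z hz => (hP z (hsub (green_aux_mem a b c d hab hcd z hz))).neg)
    (by
      rw [huI, ← hprod]
      simp only [ContinuousLinearMap.neg_apply]
      simpa [sub_eq_add_neg] using hInt)
  simp only [ContinuousLinearMap.neg_apply] at key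
  have hrhs : (∫ z in Set.Icc (a, c) (b, d), (Q' z (1, 0) - P' z (0, 1)))
      = ∫ x in a..b, ∫ y in c..d, (Q' (x, y) (1, 0) - P' (x, y) (0, 1)) := by
    rw [hprod] at hInt ⊢
    rw [Measure.volume_eq_prod, setIntegral_prod _ hInt,
      intervalIntegral.integral_of_le hab, ← integral_Icc_eq_integral_Ioc]
    refine setIntegral_congr_fun measurableSet_Icc fun x hx => ?_
    rw [intervalIntegral.integral_of_le hcd, ← integral_Icc_eq_integral_Ioc]
  rw [hrhs]
  have hmem : ∀ x ∈ Set.uIcc a b, ∀ y ∈ Set.uIcc c d, (x, y) ∈ U := fun x hx y hy => by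
    rw [Set.uIcc_of_le hab] at hx; rw [Set.uIcc_of_le hcd] at hy
    exact hsub ⟨hx, hy⟩
  have hPc : IntervalIntegrable (fun x => P (x, c)) volume a b := by
    refine ContinuousOn.intervalIntegrable fun x hx => ContinuousAt.continuousWithinAt ?_
    have : ContinuousAt (P ∘ fun x : ℝ => (x, c)) x :=
      ContinuousAt.comp (f := fun x : ℝ => (x, c)) (x := x)
        ((hP _ (hmem x hx c Set.left_mem_uIcc)).continuousAt)
        ((continuous_id.prodMk continuous_const).continuousAt)
    exact this
  have hPd : IntervalIntegrable (fun x => P (x, d)) volume a b := by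
    refine ContinuousOn.intervalIntegrable fun x hx => ContinuousAt.continuousWithinAt ?_
    have : ContinuousAt (P ∘ fun x : ℝ => (x, d)) x :=
      ContinuousAt.comp (f := fun x : ℝ => (x, d)) (x := x)
        ((hP _ (hmem x hx d Set.right_mem_uIcc)).continuousAt)
        ((continuous_id.prodMk continuous_const).continuousAt)
    exact this
  have hQb : IntervalIntegrable (fun y => Q (b, y)) volume c d := by
    refine ContinuousOn.intervalIntegrable fun y hy => ContinuousAt.continuousWithinAt ?_
    have : ContinuousAt (Q ∘ fun y : ℝ => (b, y)) y :=
      ContinuousAt.comp (f := fun y : ℝ => (b, y)) (x := y)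
        ((hQ _ (hmem b Set.right_mem_uIcc y hy)).continuousAt)
        ((continuous_const.prodMk continuous_id).continuousAt)
    exact this
  have hQa : IntervalIntegrable (fun y => Q (a, y)) volume c d := by
    refine ContinuousOn.intervalIntegrable fun y hy => ContinuousAt.continuousWithinAt ?_
    have : ContinuousAt (Q ∘ fun y : ℝ => (a, y)) y :=
      ContinuousAt.comp (f := fun y : ℝ => (a, y)) (x := y)
        ((hQ _ (hmem a Set.left_mem_uIcc y hy)).continuousAt)
        ((continuous_const.prodMk continuous_id).continuousAt)
    exact this
  simp only [sub_eq_add_neg] at key ⊢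
  rw [key]
  have e1 : (∫ x in a..b, (P (x, c) + -P (x, d)))
      = (∫ x in a..b, P (x, c)) - ∫ x in a..b, P (x, d) := by
    simpa [sub_eq_add_neg] using intervalIntegral.integral_sub hPc hPd
  have e2 : (∫ y in c..d, (Q (b, y) + -Q (a, y)))
      = (∫ y in c..d, Q (b, y)) - ∫ y in c..d, Q (a, y) := by
    simpa [sub_eq_add_neg] using intervalIntegral.integral_sub hQb hQa
  have e3 : (∫ x in a..b, -P (x, d)) = -∫ x in a..b, P (x, d) :=
    intervalIntegral.integral_neg
  have e4 : (∫ x in a..b, -P (x, c)) = -∫ x in a..b, P (x, c) :=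
    intervalIntegral.integral_neg
  rw [e1, e2, e3, e4]
  ring
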